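/- arXiv:1904.01656 — 3 statements merged into one kernel-verified Lean document; each statement's English description precedes it below -/
import Mathlib

section
/- Let a = (a_1,...,a_m) and b = (b_1,...,b_n) be sequences of positive integers with ∑ a_i = ∑ b_j = N, and let a', b' be sequences with the same sums such that a' ⊴ a and b' ⊴ b in dominance order. Then the number of contingency tables satisfies T(a,b) ≤ T(a',b'). -/
/-- The number `T(a,b)` of contingency tables with margins `(a,b)`: `m × n` matrices
of nonnegative integers with `i`-th row sum `a i` and `j`-th column sum `b j`. -/
noncomputable def ctCount (m n : ℕ) (a : Fin m → ℕ) (b : Fin n → ℕ) : ℕ :=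
  Nat.card {M : Fin m → Fin n → ℕ //
    (∀ i, ∑ j, M i j = a i) ∧ (∀ j, ∑ i, M i j = b j)}

open Finset

/-- Number of lattice points in the box `∏ [0, c j]` with coordinate sum `r`. -/
def gridCount (n : ℕ) (c : Fin n → ℕ) (r : ℕ) : ℕ :=
  ((Fintype.piFinset (fun j => Finset.range (c j + 1))).filter (fun x => ∑ j, x j = r)).card

lemma grid_mem_iff {n : ℕ} {c : Fin n → ℕ} {r : ℕ} {x : Fin n → ℕ} :
    x ∈ (Fintype.piFinset (fun j => Finset.range (c j + 1))).filter (fun x => ∑ j, x j = r) ↔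
      (∀ j, x j ≤ c j) ∧ ∑ j, x j = r := by
  simp only [mem_filter, Fintype.mem_piFinset, mem_range, Nat.lt_succ_iff]

lemma grid_sym (n : ℕ) (c : Fin n → ℕ) (r : ℕ) (hr : r ≤ ∑ j, c j) :
    gridCount n c r = gridCount n c (∑ j, c j - r) := by
  classical
  apply Finset.card_bij' (fun x _ => c - x) (fun y _ => c - y)
  · intro x hx
    rw [grid_mem_iff] at hx ⊢
    obtain ⟨hb, hs⟩ := hx
    refine ⟨fun j => by simp [Pi.sub_apply], ?_⟩
    simp only [Pi.sub_apply]
    rw [Finset.sum_tsub_distrib _ (fun j _ => (hb j)), hs]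
  · intro y hy
    rw [grid_mem_iff] at hy ⊢
    obtain ⟨hb, hs⟩ := hy
    refine ⟨fun j => by simp [Pi.sub_apply], ?_⟩
    simp only [Pi.sub_apply]
    rw [Finset.sum_tsub_distrib _ (fun j _ => (hb j)), hs]
    omega
  · intro x hx
    rw [grid_mem_iff] at hx
    funext j
    simp only [Pi.sub_apply]
    have := hx.1 j; omega
  · intro y hy
    rw [grid_mem_iff] at hy
    funext j
    simp only [Pi.sub_apply]
    have := hy.1 j; omega

lemma grid_zero (c : Fin 0 → ℕ) (r : ℕ) : gridCount 0 c r = if r = 0 then 1 else 0 := by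
  classical
  unfold gridCount
  rcases Nat.eq_zero_or_pos r with h | h
  · subst h; simp
  · rw [if_neg (by omega), Finset.card_eq_zero, Finset.filter_eq_empty_iff]
    intro x _
    simp only [Finset.univ_eq_empty, Finset.sum_empty]
    omega

lemma grid_succ (n : ℕ) (c : Fin (n+1) → ℕ) (r : ℕ) :
    gridCount (n+1) c r = ∑ t ∈ Finset.range (c 0 + 1),
      (if t ≤ r then gridCount n (fun j => c j.succ) (r - t) else 0) := by
  classical
  unfold gridCount
  rw [Finset.card_eq_sum_card_fiberwise (f := fun x => x 0) (t := Finset.range (c 0 + 1))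
    (by intro x hx
        rw [Finset.mem_coe, grid_mem_iff] at hx
        exact Finset.mem_coe.mpr (Finset.mem_range.mpr (Nat.lt_succ_of_le (hx.1 0))))]
  apply Finset.sum_congr rfl
  intro t htr
  by_cases ht : t ≤ r
  · rw [if_pos ht]
    refine Finset.card_bij' (fun x _ => Fin.tail x) (fun y _ => Fin.cons t y) ?_ ?_ ?_ ?_
    · intro x hx
      simp only [mem_filter, Fintype.mem_piFinset, mem_range, Nat.lt_succ_iff] at hx ⊢
      obtain ⟨⟨hb, hs⟩, h0⟩ := hx
      refine ⟨fun j => hb (Fin.succ j), ?_⟩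
      rw [Fin.sum_univ_succ] at hs
      show ∑ j : Fin n, x (Fin.succ j) = r - t
      omega
    · intro y hy
      simp only [mem_filter, Fintype.mem_piFinset, mem_range, Nat.lt_succ_iff] at hy ⊢
      obtain ⟨hb, hs⟩ := hy
      refine ⟨⟨?_, ?_⟩, Fin.cons_zero _ _⟩
      · intro j
        refine Fin.cases ?_ ?_ j
        · simpa using Nat.lt_succ_iff.mp (Finset.mem_range.mp htr)
        · intro i; simpa using hb i
      · rw [Fin.sum_univ_succ]
        simp only [Fin.cons_zero, Fin.cons_succ]
        omega
    · intro x hx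
      simp only [mem_filter] at hx
      show Fin.cons t (Fin.tail x) = x
      rw [← hx.2]
      exact Fin.cons_self_tail x
    · intro y _
      exact Fin.tail_cons (α := fun _ => ℕ) t y
  · rw [if_neg ht, Finset.card_eq_zero, Finset.filter_eq_empty_iff]
    intro x hx
    rw [grid_mem_iff] at hx
    intro h0
    have : x 0 ≤ ∑ j, x j := Finset.single_le_sum (fun i _ => Nat.zero_le _) (Finset.mem_univ 0)
    omega

lemma grid_mono : ∀ (n : ℕ) (c : Fin n → ℕ) (r : ℕ), 2 * r < ∑ j, c j →
    gridCount n c r ≤ gridCount n c (r + 1) := by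
  intro n
  induction n with
  | zero =>
    intro c r h
    simp at h
  | succ n ih =>
    intro c r h2
    rw [Fin.sum_univ_succ] at h2
    have hle : ∀ (d u : ℕ), 2 * u + 2 * d ≤ (∑ j : Fin n, c j.succ) + 1 →
        gridCount n (fun j => c j.succ) u ≤ gridCount n (fun j => c j.succ) (u + d) := by
      intro d
      induction d with
      | zero => intro u _; simp
      | succ d ihd =>
        intro u hu
        have ha : gridCount n (fun j => c j.succ) u ≤ gridCount n (fun j => c j.succ) (u + d) :=
          ihd u (by omega)
        have hb : gridCount n (fun j => c j.succ) (u + d) ≤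
            gridCount n (fun j => c j.succ) (u + d + 1) := ih _ (u + d) (by omega)
        rw [show u + (d + 1) = u + d + 1 by omega]
        exact le_trans ha hb
    have hL : ∀ u w, u ≤ w → u + w ≤ ∑ j : Fin n, c j.succ →
        gridCount n (fun j => c j.succ) u ≤ gridCount n (fun j => c j.succ) w := by
      intro u w huw hsum
      by_cases h1 : 2 * w ≤ (∑ j : Fin n, c j.succ) + 1
      · have h := hle (w - u) u (by omega)
        rwa [show u + (w - u) = w by omega] at h
      · have hw : w ≤ ∑ j : Fin n, c j.succ := by omega
        rw [grid_sym n (fun j => c j.succ) w hw]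
        have h := hle ((∑ j : Fin n, c j.succ) - w - u) u (by omega)
        rwa [show u + ((∑ j : Fin n, c j.succ) - w - u) = (∑ j : Fin n, c j.succ) - w by omega] at h
    rw [grid_succ, grid_succ, Finset.sum_range_succ, Finset.sum_range_succ']
    have hre : (∑ t ∈ Finset.range (c 0),
          if t + 1 ≤ r + 1 then gridCount n (fun j => c j.succ) (r + 1 - (t + 1)) else 0)
        = ∑ t ∈ Finset.range (c 0),
          if t ≤ r then gridCount n (fun j => c j.succ) (r - t) else 0 := by
      apply Finset.sum_congr rfl
      intro t _
      by_cases h : t ≤ r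
      · rw [if_pos (by omega : t + 1 ≤ r + 1), if_pos h, show r + 1 - (t + 1) = r - t by omega]
      · rw [if_neg (by omega : ¬ t + 1 ≤ r + 1), if_neg h]
    rw [hre]
    apply Nat.add_le_add le_rfl
    rw [if_pos (Nat.zero_le (r + 1)), Nat.sub_zero]
    by_cases h : c 0 ≤ r
    · rw [if_pos h]
      exact hL (r - c 0) (r + 1) (by omega) (by omega)
    · rw [if_neg h]
      exact Nat.zero_le _

lemma grid_step (n : ℕ) (c : Fin n → ℕ) (r s : ℕ) (hs : s < r) (hT : r + s = ∑ j, c j) :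
    gridCount n c r ≤ gridCount n c (r - 1) := by
  have h1 : gridCount n c r = gridCount n c s := by
    rw [grid_sym n c r (by omega)]
    congr 1
    omega
  have h2 : gridCount n c (r - 1) = gridCount n c (s + 1) := by
    rw [grid_sym n c (r - 1) (by omega)]
    congr 1
    omega
  rw [h1, h2]
  exact grid_mono n c s (by omega)
open Finset

def CT (m n : ℕ) (a : Fin m → ℕ) (b : Fin n → ℕ) : Finset (Fin m → Fin n → ℕ) :=
  (Fintype.piFinset fun _ => Fintype.piFinset fun j => Finset.range (b j + 1)).filter
    (fun M => (∀ i, ∑ j, M i j = a i) ∧ (∀ j, ∑ i, M i j = b j))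

lemma mem_CT {m n : ℕ} {a : Fin m → ℕ} {b : Fin n → ℕ} {M : Fin m → Fin n → ℕ} :
    M ∈ CT m n a b ↔ (∀ i j, M i j ≤ b j) ∧ (∀ i, ∑ j, M i j = a i) ∧ (∀ j, ∑ i, M i j = b j) := by
  simp only [CT, mem_filter, Fintype.mem_piFinset, mem_range, Nat.lt_succ_iff]

lemma ctCount_eq (m n : ℕ) (a : Fin m → ℕ) (b : Fin n → ℕ) :
    ctCount m n a b = (CT m n a b).card := by
  rw [ctCount, ← Nat.card_eq_finsetCard]
  apply Nat.card_congr
  apply Equiv.subtypeEquiv (Equiv.refl _)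
  intro M
  rw [Equiv.refl_apply, mem_CT]
  constructor
  · rintro ⟨h1, h2⟩
    refine ⟨fun i j => ?_, h1, h2⟩
    calc M i j ≤ ∑ i', M i' j :=
          Finset.single_le_sum (f := fun i' => M i' j) (fun i' _ => Nat.zero_le _) (Finset.mem_univ i)
      _ = b j := h2 j
  · rintro ⟨_, h1, h2⟩
    exact ⟨h1, h2⟩

lemma ctCount_transpose (m n : ℕ) (a : Fin m → ℕ) (b : Fin n → ℕ) :
    ctCount m n a b = ctCount n m b a := by
  rw [ctCount, ctCount]
  apply Nat.card_congr
  exact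
    { toFun := fun M => ⟨fun j i => M.1 i j, M.2.2, M.2.1⟩
      invFun := fun M => ⟨fun i j => M.1 j i, M.2.2, M.2.1⟩
      left_inv := fun M => rfl
      right_inv := fun M => rfl }

lemma ct_step (m n : ℕ) (a a' : Fin m → ℕ) (b : Fin n → ℕ) (i₀ k₀ : Fin m) (hik : i₀ ≠ k₀)
    (hlt : a k₀ < a i₀) (h'i : a' i₀ = a i₀ - 1) (h'k : a' k₀ = a k₀ + 1)
    (h'o : ∀ l, l ≠ i₀ → l ≠ k₀ → a' l = a l) :
    ctCount m n a b ≤ ctCount m n a' b := by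
  classical
  rw [ctCount_eq, ctCount_eq]
  set rest : Finset (Fin m) := (Finset.univ.erase i₀).erase k₀ with hrestdef
  have hsplit : ∀ f : Fin m → ℕ, ∑ l, f l = f i₀ + (f k₀ + ∑ l ∈ rest, f l) := by
    intro f
    rw [hrestdef,
      Finset.add_sum_erase _ f (Finset.mem_erase.mpr ⟨Ne.symm hik, Finset.mem_univ k₀⟩),
      Finset.add_sum_erase _ f (Finset.mem_univ i₀)]
  have hrestne : ∀ l ∈ rest, l ≠ i₀ ∧ l ≠ k₀ := by
    intro l hl
    rw [hrestdef, Finset.mem_erase, Finset.mem_erase] at hl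
    exact ⟨hl.2.1, hl.1⟩
  set ρ : (Fin m → Fin n → ℕ) → (Fin m → Fin n → ℕ) :=
    fun M l => if l = i₀ ∨ l = k₀ then 0 else M l with hρdef
  set B : Finset (Fin m → Fin n → ℕ) :=
    Fintype.piFinset fun _ => Fintype.piFinset fun j => Finset.range (b j + 1) with hBdef
  have hmap : ∀ (x : Fin m → ℕ), ∀ M ∈ CT m n x b, ρ M ∈ B := by
    intro x M hM
    rw [mem_CT] at hM
    simp only [hBdef, Fintype.mem_piFinset, mem_range, Nat.lt_succ_iff, hρdef]
    intro l j
    by_cases h : l = i₀ ∨ l = k₀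
    · simp [h]
    · simp only [if_neg h]
      exact hM.1 l j
  rw [Finset.card_eq_sum_card_fiberwise (hmap a), Finset.card_eq_sum_card_fiberwise (hmap a')]
  apply Finset.sum_le_sum
  intro R hRB
  have hρ_iff : ∀ M : Fin m → Fin n → ℕ,
      ρ M = R ↔ (R i₀ = 0 ∧ R k₀ = 0 ∧ ∀ l, l ≠ i₀ → l ≠ k₀ → M l = R l) := by
    intro M
    constructor
    · intro h
      refine ⟨?_, ?_, ?_⟩
      · rw [← h]; simp [hρdef]
      · rw [← h]; simp [hρdef]
      · intro l h1 h2
        rw [← h]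
        simp only [hρdef]
        rw [if_neg (by tauto)]
    · rintro ⟨h1, h2, h3⟩
      funext l
      by_cases h : l = i₀ ∨ l = k₀
      · rcases h with h | h <;> subst h <;> simp [hρdef, h1, h2]
      · push_neg at h
        simp only [hρdef]
        rw [if_neg (by tauto)]
        exact h3 l h.1 h.2
  by_cases hR0 : R i₀ = 0 ∧ R k₀ = 0
  swap
  · have hempty : (CT m n a b).filter (fun M => ρ M = R) = ∅ := by
      rw [Finset.filter_eq_empty_iff]
      intro M _ hMR
      exact hR0 ⟨((hρ_iff M).mp hMR).1, ((hρ_iff M).mp hMR).2.1⟩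
    simp [hempty]
  obtain ⟨hRi0, hRk0⟩ := hR0
  -- key column identity for fiber members
  have hcol : ∀ (x : Fin m → ℕ), ∀ M ∈ (CT m n x b).filter (fun M => ρ M = R),
      ∀ j, M i₀ j + M k₀ j + ∑ l, R l j = b j := by
    intro x M hM j
    rw [Finset.mem_filter, mem_CT] at hM
    obtain ⟨⟨hb1, hrow, hcl⟩, hMR⟩ := hM
    have h1 : ∑ l, M l j = M i₀ j + (M k₀ j + ∑ l ∈ rest, M l j) := hsplit (fun l => M l j)
    have h2 : ∑ l, R l j = R i₀ j + (R k₀ j + ∑ l ∈ rest, R l j) := hsplit (fun l => R l j)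
    have h3 : ∑ l ∈ rest, M l j = ∑ l ∈ rest, R l j := by
      apply Finset.sum_congr rfl
      intro l hl
      rw [((hρ_iff M).mp hMR).2.2 l (hrestne l hl).1 (hrestne l hl).2]
    have h4 : R i₀ j = 0 := by rw [hRi0]; rfl
    have h5 : R k₀ j = 0 := by rw [hRk0]; rfl
    have h6 : ∑ i, M i j = b j := hcl j
    omega
  -- rest row sums must match the margins
  by_cases hA : ∀ l, l ≠ i₀ → l ≠ k₀ → ∑ j, R l j = a l
  swap
  · have hempty : (CT m n a b).filter (fun M => ρ M = R) = ∅ := by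
      rw [Finset.filter_eq_empty_iff]
      intro M hM hMR
      apply hA
      intro l h1 h2
      rw [mem_CT] at hM
      rw [← ((hρ_iff M).mp hMR).2.2 l h1 h2]
      exact hM.2.1 l
    simp [hempty]
  -- column partial sums must fit under b
  by_cases hS : ∀ j, ∑ l, R l j ≤ b j
  swap
  · have hempty : (CT m n a b).filter (fun M => ρ M = R) = ∅ := by
      rw [Finset.filter_eq_empty_iff]
      intro M hM hMR
      apply hS
      intro j
      have := hcol a M (Finset.mem_filter.mpr ⟨hM, hMR⟩) j
      omega
    simp [hempty]
  set c : Fin n → ℕ := fun j => b j - ∑ l, R l j with hcdef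
  have hcval : ∀ j, c j = b j - ∑ l, R l j := fun j => rfl
  by_cases hTot : ∑ j, c j = a i₀ + a k₀
  swap
  · have hempty : (CT m n a b).filter (fun M => ρ M = R) = ∅ := by
      rw [Finset.filter_eq_empty_iff]
      intro M hM hMR
      apply hTot
      have hmem : M ∈ (CT m n a b).filter (fun M => ρ M = R) :=
        Finset.mem_filter.mpr ⟨hM, hMR⟩
      have h1 : ∀ j, c j = M i₀ j + M k₀ j := by
        intro j
        have := hcol a M hmem j
        rw [hcval j]
        omega
      rw [mem_CT] at hM
      calc ∑ j, c j = ∑ j, (M i₀ j + M k₀ j) := Finset.sum_congr rfl (fun j _ => h1 j)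
        _ = (∑ j, M i₀ j) + ∑ j, M k₀ j := Finset.sum_add_distrib
        _ = a i₀ + a k₀ := by rw [hM.2.1 i₀, hM.2.1 k₀]
    simp [hempty]
  -- the generic fiber count
  have fibcard : ∀ (x : Fin m → ℕ), (∀ l, l ≠ i₀ → l ≠ k₀ → ∑ j, R l j = x l) →
      ∑ j, c j = x i₀ + x k₀ →
      ((CT m n x b).filter (fun M => ρ M = R)).card = gridCount n c (x i₀) := by
    intro x hx hxtot
    set inv : (Fin n → ℕ) → Fin m → Fin n → ℕ :=
      fun v l => if l = i₀ then v else if l = k₀ then (fun j => c j - v j) else R l with hinvdef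
    have hinv_i : ∀ v, inv v i₀ = v := by
      intro v; simp [hinvdef]
    have hinv_k : ∀ v, inv v k₀ = fun j => c j - v j := by
      intro v; simp [hinvdef, Ne.symm hik]
    have hinv_o : ∀ v l, l ≠ i₀ → l ≠ k₀ → inv v l = R l := by
      intro v l h1 h2; simp [hinvdef, h1, h2]
    have hRb : ∀ l j, R l j ≤ b j := by
      intro l j
      have h1 := hS j
      have h2 : R l j ≤ ∑ l, R l j :=
        Finset.single_le_sum (f := fun l => R l j) (fun _ _ => Nat.zero_le _) (Finset.mem_univ l)
      omega
    simp only [gridCount]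
    refine Finset.card_bij' (fun M _ => M i₀) (fun v _ => inv v) ?_ ?_ ?_ ?_
    · intro M hM
      beta_reduce
      rw [grid_mem_iff]
      have hM' := hM
      rw [Finset.mem_filter, mem_CT] at hM'
      refine ⟨fun j => ?_, hM'.1.2.1 i₀⟩
      have := hcol x M hM j
      have := hcval j
      omega
    · intro v hv
      rw [grid_mem_iff] at hv
      obtain ⟨hvb, hvs⟩ := hv
      beta_reduce
      rw [Finset.mem_filter, mem_CT]
      have hcsum : ∑ j, (c j - v j) = x k₀ := by
        rw [Finset.sum_tsub_distrib _ (fun j _ => hvb j), hvs]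
        omega
      refine ⟨⟨?_, ?_, ?_⟩, ?_⟩
      · intro l j
        by_cases h1 : l = i₀
        · subst h1
          rw [hinv_i]
          have := hvb j
          have := hcval j
          omega
        · by_cases h2 : l = k₀
          · subst h2
            rw [hinv_k]
            show c j - v j ≤ b j
            have := hcval j
            have := hS j
            omega
          · rw [hinv_o v l h1 h2]
            exact hRb l j
      · intro l
        by_cases h1 : l = i₀
        · subst h1
          rw [hinv_i]
          exact hvs
        · by_cases h2 : l = k₀
          · subst h2
            rw [hinv_k]
            exact hcsum
          · rw [hinv_o v l h1 h2]
            exact hx l h1 h2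
      · intro j
        have h1 : ∑ l, inv v l j = v j + ((c j - v j) + ∑ l ∈ rest, R l j) := by
          rw [hsplit (fun l => inv v l j)]
          rw [hinv_i, hinv_k]
          congr 1
          congr 1
          apply Finset.sum_congr rfl
          intro l hl
          rw [hinv_o v l (hrestne l hl).1 (hrestne l hl).2]
        rw [h1]
        have h2 : ∑ l, R l j = R i₀ j + (R k₀ j + ∑ l ∈ rest, R l j) := hsplit (fun l => R l j)
        have h4 : R i₀ j = 0 := by rw [hRi0]; rfl
        have h5 : R k₀ j = 0 := by rw [hRk0]; rfl
        have := hS j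
        have := hcval j
        have := hvb j
        omega
      · rw [hρ_iff]
        exact ⟨hRi0, hRk0, fun l h1 h2 => hinv_o v l h1 h2⟩
    · intro M hM
      have hMR := (Finset.mem_filter.mp hM).2
      beta_reduce
      funext l
      by_cases h1 : l = i₀
      · subst h1
        rw [hinv_i]
      · by_cases h2 : l = k₀
        · rw [h2, hinv_k]
          funext j
          show c j - M i₀ j = M k₀ j
          have := hcol x M hM j
          have := hcval j
          have := hS j
          omega
        · rw [hinv_o _ l h1 h2]
          exact (((hρ_iff M).mp hMR).2.2 l h1 h2).symm
    · intro v _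
      beta_reduce
      rw [hinv_i]
  -- assemble
  rw [fibcard a hA hTot,
    fibcard a' (fun l h1 h2 => by rw [hA l h1 h2, h'o l h1 h2]) (by rw [h'i, h'k]; omega)]
  rw [h'i]
  exact grid_step n c (a i₀) (a k₀) hlt hTot.symm

def pref (m : ℕ) (a : Fin m → ℕ) (t : ℕ) : ℕ :=
  ∑ j ∈ Finset.univ.filter (fun j : Fin m => (j : ℕ) < t), a j

lemma pref_succ (m : ℕ) (a : Fin m → ℕ) (t : ℕ) (ht : t < m) :
    pref m a (t + 1) = pref m a t + a ⟨t, ht⟩ := by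
  unfold pref
  have h : Finset.univ.filter (fun j : Fin m => (j : ℕ) < t + 1)
      = insert ⟨t, ht⟩ (Finset.univ.filter (fun j : Fin m => (j : ℕ) < t)) := by
    ext j
    simp only [mem_filter, mem_univ, true_and, mem_insert, Fin.ext_iff]
    omega
  rw [h, Finset.sum_insert (by simp)]
  exact Nat.add_comm _ _

lemma pref_top (m : ℕ) (a : Fin m → ℕ) (t : ℕ) (ht : m ≤ t) :
    pref m a t = ∑ j, a j := by
  unfold pref
  rw [Finset.filter_true_of_mem (fun j _ => lt_of_lt_of_le j.2 ht)]

lemma ct_chain (m n : ℕ) (b : Fin n → ℕ) (a' : Fin m → ℕ) (ha' : Antitone a') :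
    ∀ (Φ : ℕ) (a : Fin m → ℕ), (∑ i, a i = ∑ i, a' i) →
      (∀ t : ℕ, pref m a' t ≤ pref m a t) →
      (∑ t ∈ Finset.range (m + 1), (pref m a t - pref m a' t)) ≤ Φ →
      ctCount m n a b ≤ ctCount m n a' b := by
  classical
  intro Φ
  induction Φ with
  | zero =>
    intro a hsum hdom hmeas
    have hz : ∀ t ∈ Finset.range (m + 1), pref m a t - pref m a' t = 0 := by
      intro t ht
      have := Finset.sum_eq_zero_iff.mp (Nat.le_zero.mp hmeas) t ht
      exact this
    have heq : ∀ t, t ≤ m → pref m a t = pref m a' t := by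
      intro t ht
      have h1 := hz t (Finset.mem_range.mpr (by omega))
      have h2 := hdom t
      omega
    have : a = a' := by
      funext l
      have h1 := heq (l : ℕ) (le_of_lt l.2)
      have h2 := heq ((l : ℕ) + 1) l.2
      have h3 := pref_succ m a (l : ℕ) l.2
      have h4 := pref_succ m a' (l : ℕ) l.2
      rw [Fin.eta] at h3 h4
      omega
    rw [this]
  | succ Φ ih =>
    intro a hsum hdom hmeas
    by_cases heqa : a = a'
    · rw [heqa]
    -- least index where a and a' differ
    have hne : (Finset.univ.filter (fun l : Fin m => a l ≠ a' l)).Nonempty := by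
      rw [Finset.filter_nonempty_iff]
      by_contra h
      push_neg at h
      exact heqa (funext (fun l => h l (Finset.mem_univ l)))
    set i₀ := (Finset.univ.filter (fun l : Fin m => a l ≠ a' l)).min' hne with hi₀def
    have hi₀ : a i₀ ≠ a' i₀ :=
      (Finset.mem_filter.mp ((Finset.univ.filter (fun l : Fin m => a l ≠ a' l)).min'_mem hne)).2
    have hlow : ∀ l : Fin m, l < i₀ → a l = a' l := by
      intro l hl
      by_contra h
      have hmem : l ∈ Finset.univ.filter (fun l : Fin m => a l ≠ a' l) :=
        Finset.mem_filter.mpr ⟨Finset.mem_univ l, h⟩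
      have := Finset.min'_le _ l hmem
      rw [← hi₀def] at this
      exact absurd hl (not_lt.mpr this)
    have hprefeq : pref m a (i₀ : ℕ) = pref m a' (i₀ : ℕ) := by
      unfold pref
      apply Finset.sum_congr rfl
      intro l hl
      rw [Finset.mem_filter] at hl
      exact hlow l (by exact hl.2)
    have hii : a' i₀ < a i₀ := by
      have h2 := hdom ((i₀ : ℕ) + 1)
      have h3 := pref_succ m a (i₀ : ℕ) i₀.2
      have h4 := pref_succ m a' (i₀ : ℕ) i₀.2
      rw [Fin.eta] at h3 h4
      rcases Nat.lt_or_ge (a' i₀) (a i₀) with h | h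
      · exact h
      · exfalso
        apply hi₀
        omega
    -- least index where a' exceeds a
    have hkne : (Finset.univ.filter (fun l : Fin m => a l < a' l)).Nonempty := by
      rw [Finset.filter_nonempty_iff]
      by_contra h
      push_neg at h
      have : ∑ i, a' i < ∑ i, a i :=
        Finset.sum_lt_sum (fun l _ => h l (Finset.mem_univ l)) ⟨i₀, Finset.mem_univ i₀, hii⟩
      omega
    set k₀ := (Finset.univ.filter (fun l : Fin m => a l < a' l)).min' hkne with hk₀def
    have hk₀ : a k₀ < a' k₀ :=
      (Finset.mem_filter.mp ((Finset.univ.filter (fun l : Fin m => a l < a' l)).min'_mem hkne)).2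
    have hlowk : ∀ l : Fin m, l < k₀ → a' l ≤ a l := by
      intro l hl
      by_contra h
      have hmem : l ∈ Finset.univ.filter (fun l : Fin m => a l < a' l) :=
        Finset.mem_filter.mpr ⟨Finset.mem_univ l, by omega⟩
      have := Finset.min'_le _ l hmem
      rw [← hk₀def] at this
      exact absurd hl (not_lt.mpr this)
    have hik : i₀ < k₀ := by
      have hmem : k₀ ∈ Finset.univ.filter (fun l : Fin m => a l ≠ a' l) :=
        Finset.mem_filter.mpr ⟨Finset.mem_univ k₀, by omega⟩
      have h1 : i₀ ≤ k₀ := by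
        rw [hi₀def]
        exact Finset.min'_le _ k₀ hmem
      rcases lt_or_eq_of_le h1 with h | h
      · exact h
      · exfalso; rw [h] at hii; omega
    have hlt : a k₀ < a i₀ := by
      have := ha' (le_of_lt hik)
      omega
    -- the transfer
    set a'' : Fin m → ℕ := fun l => if l = i₀ then a i₀ - 1 else if l = k₀ then a k₀ + 1 else a l
      with ha''def
    have ha''i : a'' i₀ = a i₀ - 1 := by simp [ha''def]
    have ha''k : a'' k₀ = a k₀ + 1 := by simp [ha''def, (ne_of_lt hik).symm]
    have ha''o : ∀ l, l ≠ i₀ → l ≠ k₀ → a'' l = a l := by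
      intro l h1 h2; simp [ha''def, h1, h2]
    have hstep : ctCount m n a b ≤ ctCount m n a'' b :=
      ct_step m n a a'' b i₀ k₀ (ne_of_lt hik) hlt ha''i ha''k ha''o
    -- strict prefix inequality between i₀ and k₀
    have hstrict : ∀ d t : ℕ, t = (i₀ : ℕ) + 1 + d → t ≤ (k₀ : ℕ) → pref m a' t < pref m a t := by
      intro d
      induction d with
      | zero =>
        intro t h1 h2
        have h1' : t = (i₀ : ℕ) + 1 := by omega
        subst h1'
        have h3 := pref_succ m a (i₀ : ℕ) i₀.2
        have h4 := pref_succ m a' (i₀ : ℕ) i₀.2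
        rw [Fin.eta] at h3 h4
        omega
      | succ d ihd =>
        intro t h1 h2
        have hm : (i₀ : ℕ) + 1 + d < m := by
          have := k₀.2
          omega
        have h3 := pref_succ m a ((i₀ : ℕ) + 1 + d) hm
        have h4 := pref_succ m a' ((i₀ : ℕ) + 1 + d) hm
        have h5 := ihd ((i₀ : ℕ) + 1 + d) rfl (by omega)
        have h6 : a' ⟨(i₀ : ℕ) + 1 + d, hm⟩ ≤ a ⟨(i₀ : ℕ) + 1 + d, hm⟩ := by
          apply hlowk
          rw [Fin.lt_def]
          show (i₀ : ℕ) + 1 + d < (k₀ : ℕ)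
          omega
        rw [h1]
        have : (i₀ : ℕ) + 1 + (d + 1) = ((i₀ : ℕ) + 1 + d) + 1 := by omega
        rw [this]
        omega
    -- comparison of prefixes of a'' and a
    have hcomp : ∀ t : ℕ,
        ((i₀ : ℕ) < t ∧ t ≤ (k₀ : ℕ) ∧ pref m a'' t + 1 = pref m a t) ∨
        (¬((i₀ : ℕ) < t ∧ t ≤ (k₀ : ℕ)) ∧ pref m a'' t = pref m a t) := by
      intro t
      by_cases hti : (i₀ : ℕ) < t
      · have hi_mem : i₀ ∈ Finset.univ.filter (fun j : Fin m => (j : ℕ) < t) := by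
          simp [hti]
        by_cases htk : (k₀ : ℕ) < t
        · refine Or.inr ⟨by omega, ?_⟩
          have hk_mem : k₀ ∈ (Finset.univ.filter (fun j : Fin m => (j : ℕ) < t)).erase i₀ :=
            Finset.mem_erase.mpr ⟨(ne_of_lt hik).symm, by simp [htk]⟩
          have e1 := Finset.add_sum_erase _ a'' hk_mem
          have e1' := Finset.add_sum_erase _ a'' hi_mem
          have e2 := Finset.add_sum_erase _ a hk_mem
          have e2' := Finset.add_sum_erase _ a hi_mem
          have e3 : ∑ l ∈ ((Finset.univ.filter (fun j : Fin m => (j : ℕ) < t)).erase i₀).erase k₀,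
              a'' l = ∑ l ∈ ((Finset.univ.filter
                (fun j : Fin m => (j : ℕ) < t)).erase i₀).erase k₀, a l := by
            apply Finset.sum_congr rfl
            intro l hl
            rw [Finset.mem_erase, Finset.mem_erase] at hl
            exact ha''o l hl.2.1 hl.1
          unfold pref
          omega
        · refine Or.inl ⟨hti, by omega, ?_⟩
          have hknot : k₀ ∉ Finset.univ.filter (fun j : Fin m => (j : ℕ) < t) := by
            simp [htk]
          have e1 := Finset.add_sum_erase _ a'' hi_mem
          have e2 := Finset.add_sum_erase _ a hi_mem
          have e3 : ∑ l ∈ (Finset.univ.filter (fun j : Fin m => (j : ℕ) < t)).erase i₀, a'' l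
              = ∑ l ∈ (Finset.univ.filter (fun j : Fin m => (j : ℕ) < t)).erase i₀, a l := by
            apply Finset.sum_congr rfl
            intro l hl
            rw [Finset.mem_erase] at hl
            refine ha''o l hl.1 ?_
            intro h
            rw [h] at hl
            exact hknot hl.2
          unfold pref
          omega
      · refine Or.inr ⟨by omega, ?_⟩
        unfold pref
        apply Finset.sum_congr rfl
        intro l hl
        rw [Finset.mem_filter] at hl
        refine ha''o l ?_ ?_
        · intro h
          rw [h] at hl
          omega
        · intro h
          rw [h] at hl
          have := hik
          rw [Fin.lt_iff_val_lt_val] at this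
          omega
    have hsum'' : ∑ i, a'' i = ∑ i, a' i := by
      have h1 := hcomp m
      have h2 := pref_top m a'' m le_rfl
      have h3 := pref_top m a m le_rfl
      have h4 := k₀.2
      omega
    have hdom'' : ∀ t : ℕ, pref m a' t ≤ pref m a'' t := by
      intro t
      rcases hcomp t with ⟨h1, h2, h3⟩ | ⟨h1, h2⟩
      · have := hstrict (t - (i₀ : ℕ) - 1) t (by omega) h2
        omega
      · have := hdom t
        omega
    have hmeas'' : (∑ t ∈ Finset.range (m + 1), (pref m a'' t - pref m a' t)) ≤ Φ := by
      have hlt2 : (∑ t ∈ Finset.range (m + 1), (pref m a'' t - pref m a' t))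
          < ∑ t ∈ Finset.range (m + 1), (pref m a t - pref m a' t) := by
        apply Finset.sum_lt_sum
        · intro t _
          rcases hcomp t with ⟨h1, h2, h3⟩ | ⟨h1, h2⟩ <;> omega
        · refine ⟨(i₀ : ℕ) + 1, Finset.mem_range.mpr (by have := i₀.2; omega), ?_⟩
          rcases hcomp ((i₀ : ℕ) + 1) with ⟨h1, h2, h3⟩ | ⟨h1, h2⟩
          · have h4 := hdom'' ((i₀ : ℕ) + 1)
            omega
          · exfalso
            apply h1
            constructor
            · omega
            · have := hik
              rw [Fin.lt_iff_val_lt_val] at this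
              omega
      omega
    exact le_trans hstep (ih a'' hsum'' hdom'' hmeas'')


/-- Majorization property of contingency tables: if `a' ⊴ a` and `b' ⊴ b` in the
dominance order (all margins positive, decreasing, with equal total sums `N`), then
`T(a,b) ≤ T(a',b')`. -/
theorem contingency_majorization (m n N : ℕ)
    (a a' : Fin m → ℕ) (b b' : Fin n → ℕ)
    (hapos : ∀ i, 0 < a i) (ha'pos : ∀ i, 0 < a' i)
    (hbpos : ∀ j, 0 < b j) (hb'pos : ∀ j, 0 < b' j)
    (hamono : Antitone a) (ha'mono : Antitone a')
    (hbmono : Antitone b) (hb'mono : Antitone b')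
    (hsa : ∑ i, a i = N) (hsa' : ∑ i, a' i = N)
    (hsb : ∑ j, b j = N) (hsb' : ∑ j, b' j = N)
    (hda : ∀ i : ℕ, ∑ j ∈ Finset.univ.filter (fun j : Fin m => (j : ℕ) < i), a' j ≤
        ∑ j ∈ Finset.univ.filter (fun j : Fin m => (j : ℕ) < i), a j)
    (hdb : ∀ i : ℕ, ∑ j ∈ Finset.univ.filter (fun j : Fin n => (j : ℕ) < i), b' j ≤
        ∑ j ∈ Finset.univ.filter (fun j : Fin n => (j : ℕ) < i), b j) :
    ctCount m n a b ≤ ctCount m n a' b' := by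

  have h1 : ctCount m n a b ≤ ctCount m n a' b := by
    apply ct_chain m n b a' ha'mono
      (∑ t ∈ Finset.range (m + 1), (pref m a t - pref m a' t)) a ?_ ?_ le_rfl
    · rw [hsa, hsa']
    · exact hda
  have h2 : ctCount m n a' b ≤ ctCount m n a' b' := by
    rw [ctCount_transpose m n a' b, ctCount_transpose m n a' b']
    apply ct_chain n m a' b' hb'mono
      (∑ t ∈ Finset.range (n + 1), (pref n b t - pref n b' t)) b ?_ ?_ le_rfl
    · rw [hsb, hsb']
    · exact hdb
  exact le_trans h1 h2
end

section
/- For every n ≥ 1, E_n · F_n ≥ n!, where E_n is the number of alternating permutations in S_n and F_n is the n-th Fibonacci number. -/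
/-- The Euler number `E_n`: the number of alternating permutations `σ` of `{0,…,n-1}`,
i.e. `σ 0 > σ 1 < σ 2 > σ 3 < ⋯`. -/
noncomputable def alternatingCount (n : ℕ) : ℕ :=
  Nat.card {σ : Equiv.Perm (Fin n) //
    ∀ i : ℕ, ∀ h : i + 1 < n,
      (Even i → σ ⟨i + 1, h⟩ < σ ⟨i, Nat.lt_of_succ_lt h⟩) ∧
      (¬Even i → σ ⟨i, Nat.lt_of_succ_lt h⟩ < σ ⟨i + 1, h⟩)}

namespace EulerFibAux

/-- Oriented strict order: if `p` then `b < a` ("descending step") else `a < b`. -/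
def Odir (p : Bool) (a b : ℕ) : Prop := if p then b < a else a < b

lemma odir_trans {p : Bool} {a b c : ℕ} (h1 : Odir p a b) (h2 : Odir p b c) : Odir p a c := by
  cases p <;> simp [Odir] at * <;> omega

lemma odir_asymm {p : Bool} {a b : ℕ} (h : Odir p a b) : ¬ Odir p b a := by
  cases p <;> simp [Odir] at * <;> omega

lemma odir_total {p : Bool} {a b : ℕ} (h : a ≠ b) : Odir p a b ∨ Odir p b a := by
  cases p <;> simp [Odir] <;> omega

lemma odir_not {p : Bool} {a b : ℕ} : Odir (!p) a b ↔ Odir p b a := by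
  cases p <;> simp [Odir]

/-- Direction of comparison `i` for starting direction `p`. -/
def dirAt (p : Bool) (i : ℕ) : Bool := if i % 2 = 0 then p else !p

lemma dirAt_zero (p : Bool) : dirAt p 0 = p := rfl

lemma dirAt_succ (p : Bool) (i : ℕ) : dirAt p (i + 1) = !(dirAt p i) := by
  unfold dirAt
  rcases Nat.mod_two_eq_zero_or_one i with h | h
  · have h2 : (i + 1) % 2 = 1 := by omega
    simp [h, h2]
  · have h2 : (i + 1) % 2 = 0 := by omega
    simp [h, h2]

lemma dirAt_not (p : Bool) (i : ℕ) : dirAt (!p) i = !(dirAt p i) := by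
  unfold dirAt
  split <;> simp

lemma dirAt_add_two (p : Bool) (i : ℕ) : dirAt p (i + 2) = dirAt p i := by
  unfold dirAt
  have : (i + 2) % 2 = i % 2 := by omega
  rw [this]

/-- `g` is alternating on `[0, m)` with starting direction `p`. -/
def Alt (p : Bool) (g : ℕ → ℕ) (m : ℕ) : Prop :=
  ∀ i, i + 1 < m → Odir (dirAt p i) (g i) (g (i + 1))

/-- The position-swapping function associated to a set `S` of swap positions. -/
def swapFn (S : Finset ℕ) (j : ℕ) : ℕ :=
  if j ∈ S then j + 1 else if j ≠ 0 ∧ j - 1 ∈ S then j - 1 else j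

lemma swapFn_of_mem {S : Finset ℕ} {j : ℕ} (h : j ∈ S) : swapFn S j = j + 1 := by
  unfold swapFn; rw [if_pos h]

lemma swapFn_of_mem_pred {S : Finset ℕ} {j : ℕ} (h1 : j ∉ S) (h2 : j ≠ 0) (h3 : j - 1 ∈ S) :
    swapFn S j = j - 1 := by
  unfold swapFn; rw [if_neg h1, if_pos ⟨h2, h3⟩]

lemma swapFn_of_not {S : Finset ℕ} {j : ℕ} (h1 : j ∉ S) (h3 : ¬(j ≠ 0 ∧ j - 1 ∈ S)) :
    swapFn S j = j := by
  unfold swapFn; rw [if_neg h1, if_neg h3]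

lemma swapFn_invol {S : Finset ℕ} (hi : ∀ i ∈ S, i + 1 ∉ S) (j : ℕ) :
    swapFn S (swapFn S j) = j := by
  by_cases h1 : j ∈ S
  · rw [swapFn_of_mem h1, swapFn_of_mem_pred (hi j h1) (by omega) (by simpa using h1)]
    omega
  · by_cases h2 : j ≠ 0 ∧ j - 1 ∈ S
    · rw [swapFn_of_mem_pred h1 h2.1 h2.2, swapFn_of_mem h2.2]
      omega
    · rw [swapFn_of_not h1 h2, swapFn_of_not h1 h2]

lemma swapFn_lt {S : Finset ℕ} {n j : ℕ} (hb : ∀ i ∈ S, i + 1 < n) (hj : j < n) :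
    swapFn S j < n := by
  unfold swapFn
  split
  · rename_i h; exact hb _ h
  · split <;> omega

lemma swapFn_eq_zero {S : Finset ℕ} {j : ℕ} (h : swapFn S j = 0) :
    j = 0 ∨ (j = 1 ∧ 0 ∈ S) := by
  by_cases h1 : j ∈ S
  · rw [swapFn_of_mem h1] at h; omega
  · by_cases h2 : j ≠ 0 ∧ j - 1 ∈ S
    · rw [swapFn_of_mem_pred h1 h2.1 h2.2] at h
      have : j = 1 := by omega
      subst this
      exact Or.inr ⟨rfl, by simpa using h2.2⟩
    · rw [swapFn_of_not h1 h2] at h; omega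

/-- Generic shift computation for `swapFn`. -/
lemma swapFn_step {S T : Finset ℕ} {c j : ℕ} (hc : 1 ≤ c) (hj : 1 ≤ j)
    (hA : (j + c ∈ S ↔ j ∈ T)) (hB : (j + c - 1 ∈ S ↔ j - 1 ∈ T)) :
    swapFn S (j + c) = swapFn T j + c := by
  by_cases h1 : j ∈ T
  · rw [swapFn_of_mem (hA.mpr h1), swapFn_of_mem h1]
    omega
  · by_cases h2 : j - 1 ∈ T
    · rw [swapFn_of_mem_pred (fun hmem => h1 (hA.mp hmem)) (by omega) (hB.mpr h2),
        swapFn_of_mem_pred h1 (by omega) h2]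
      omega
    · rw [swapFn_of_not (fun hmem => h1 (hA.mp hmem)) (by
        rintro ⟨-, hmem⟩; exact h2 (hB.mp hmem)),
        swapFn_of_not h1 (by rintro ⟨-, hmem⟩; exact h2 hmem)]


/-- Core lemma: every injective sequence can be made alternating by swapping
disjoint pairs of adjacent positions. -/
lemma key : ∀ (m : ℕ) (p : Bool) (g : ℕ → ℕ),
    (∀ i, i < m → ∀ j, j < m → i ≠ j → g i ≠ g j) →
    ∃ S : Finset ℕ, (∀ i ∈ S, i + 1 < m) ∧ (∀ i ∈ S, i + 1 ∉ S) ∧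
      Alt p (fun j => g (swapFn S j)) m := by
  intro m
  induction m using Nat.strong_induction_on with
  | _ m IH =>
  intro p g hinj
  by_cases hm2 : m < 2
  · exact ⟨∅, by simp, by simp, fun i hi => by omega⟩
  push_neg at hm2
  have h01d : g 0 ≠ g 1 := hinj 0 (by omega) 1 (by omega) (by omega)
  rcases odir_total (p := p) h01d with h01 | h10
  · -- CASE 1 : comparison 0 is correct
    obtain ⟨T, hbT, hiT, hAT⟩ := IH (m - 1) (by omega) (!p) (fun j => g (j + 1))
      (by intro i hi' j hj' hne; exact hinj (i + 1) (by omega) (j + 1) (by omega) (by omega))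
    refine ⟨T.image (· + 1), ?_, ?_, ?_⟩
    · intro i hiS
      simp only [Finset.mem_image] at hiS
      obtain ⟨a, haT, rfl⟩ := hiS
      have := hbT a haT; omega
    · intro i hiS hiS'
      simp only [Finset.mem_image] at hiS hiS'
      obtain ⟨a, haT, ha⟩ := hiS
      obtain ⟨b, hbT', hb⟩ := hiS'
      have hba : a + 1 ∈ T := by
        have : b = a + 1 := by omega
        exact this ▸ hbT'
      exact hiT a haT hba
    · have memS : ∀ k, k ∈ T.image (· + 1) ↔ ∃ a ∈ T, a + 1 = k := by
        intro k; simp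
      have eS0 : swapFn (T.image (· + 1)) 0 = 0 := by
        apply swapFn_of_not
        · rw [memS]; rintro ⟨a, -, ha⟩; omega
        · rintro ⟨h, -⟩; exact h rfl
      have eS : ∀ j, swapFn (T.image (· + 1)) (j + 1) = swapFn T j + 1 := by
        intro j
        rcases Nat.eq_zero_or_pos j with rfl | hj
        · simp only [Nat.zero_add]
          by_cases h0T : 0 ∈ T
          · rw [swapFn_of_mem ((memS 1).mpr ⟨0, h0T, rfl⟩), swapFn_of_mem h0T]
          · have hn1 : (1 : ℕ) ∉ T.image (· + 1) := by
              rw [memS]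
              rintro ⟨a, haT, ha⟩
              have ha0 : a = 0 := by omega
              exact h0T (ha0 ▸ haT)
            have hn0 : ¬((1 : ℕ) ≠ 0 ∧ (1 : ℕ) - 1 ∈ T.image (· + 1)) := by
              rintro ⟨-, hmem⟩
              rw [memS] at hmem
              obtain ⟨a, -, ha⟩ := hmem
              omega
            rw [swapFn_of_not hn1 hn0, swapFn_of_not h0T (by rintro ⟨h, -⟩; exact h rfl)]
        · refine swapFn_step le_rfl hj ?_ ?_
          · rw [memS]
            constructor
            · rintro ⟨a, haT, ha⟩; exact (by omega : a = j) ▸ haT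
            · intro h; exact ⟨j, h, rfl⟩
          · show j + 1 - 1 ∈ T.image (· + 1) ↔ j - 1 ∈ T
            simp only [Nat.add_sub_cancel]
            rw [memS]
            constructor
            · rintro ⟨a, haT, ha⟩; exact (by omega : a = j - 1) ▸ haT
            · intro h; exact ⟨j - 1, h, by omega⟩
      intro i hi
      simp only []
      rcases i with _ | j
      · rw [eS0, eS 0, dirAt_zero]
        by_cases h0T : 0 ∈ T
        · have e0 : swapFn T 0 = 1 := swapFn_of_mem h0T
          have e1 : swapFn T 1 = 0 :=
            swapFn_of_mem_pred (hiT 0 h0T) one_ne_zero (by simpa using h0T)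
          have h12 : Odir p (g 1) (g 2) := by
            have hAT0 := hAT 0 (by have := hbT 0 h0T; omega)
            simp only [e0, e1, dirAt_zero] at hAT0
            rw [odir_not] at hAT0
            exact hAT0
          rw [e0]
          exact odir_trans h01 h12
        · have e0 : swapFn T 0 = 0 := swapFn_of_not h0T (by rintro ⟨h, -⟩; exact h rfl)
          rw [e0]
          exact h01
      · have hATj := hAT j (by omega)
        simp only [] at hATj
        rw [eS j, eS (j + 1)]
        have hd : dirAt (!p) j = dirAt p (j + 1) := by rw [dirAt_succ, dirAt_not]
        rw [← hd]
        exact hATj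
  · -- CASE 2 : comparison 0 is wrong
    by_cases hm3 : m < 3
    · -- m = 2
      have hm2' : m = 2 := by omega
      subst hm2'
      refine ⟨{0}, by simp, by simp, ?_⟩
      intro i hi
      have hi0 : i = 0 := by omega
      subst hi0
      have e0 : swapFn {0} 0 = 1 := swapFn_of_mem (by simp)
      have e1 : swapFn {0} 1 = 0 := swapFn_of_mem_pred (by simp) one_ne_zero (by simp)
      simp only [e0, e1, dirAt_zero]
      exact h10
    push_neg at hm3
    have h02d : g 0 ≠ g 2 := hinj 0 (by omega) 2 (by omega) (by omega)
    rcases odir_total (p := p) h02d with h02 | h20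
    · -- branches 5-7 : oriented g0 > g2
      by_cases hm4 : m < 4
      · -- m = 3
        have hm3' : m = 3 := by omega
        subst hm3'
        refine ⟨{1}, by simp, by simp, ?_⟩
        intro i hi
        have e0 : swapFn {1} 0 = 0 := swapFn_of_not (by simp) (by simp)
        have e1 : swapFn {1} 1 = 2 := swapFn_of_mem (by simp)
        have e2 : swapFn {1} 2 = 1 := swapFn_of_mem_pred (by simp) (by omega) (by simp)
        have hi01 : i = 0 ∨ i = 1 := by omega
        rcases hi01 with rfl | rfl
        · simp only [e0, e1, dirAt_zero]
          exact h02
        · simp only [e1, e2]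
          have : dirAt p 1 = !p := rfl
          rw [this, odir_not]
          exact odir_trans h10 h02
      push_neg at hm4
      obtain ⟨T, hbT, hiT, hAT⟩ := IH (m - 2) (by omega) p
        (fun j => if j = 0 then g 1 else g (j + 2))
        (by
          intro i hi' j hj' hne
          by_cases hi0 : i = 0 <;> by_cases hj0 : j = 0 <;>
            simp only [hi0, hj0, if_pos, if_neg, ite_true, ite_false] <;>
            first
              | omega
              | (apply hinj <;> omega)
              | (simp only [if_neg hi0, if_neg hj0]; apply hinj <;> omega)
              | (simp only [if_neg hj0]; apply hinj <;> omega)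
              | (simp only [if_neg hi0]; apply hinj <;> omega))
      by_cases h0T : 0 ∈ T
      · -- case 6b
        have h1T : 1 ∉ T := hiT 0 h0T
        have eT0 : swapFn T 0 = 1 := swapFn_of_mem h0T
        have eT1 : swapFn T 1 = 0 := swapFn_of_mem_pred h1T one_ne_zero (by simpa using h0T)
        have h31 : Odir p (g 3) (g 1) := by
          have hAT0 : Odir (dirAt p 0)
              (if swapFn T 0 = 0 then g 1 else g (swapFn T 0 + 2))
              (if swapFn T 1 = 0 then g 1 else g (swapFn T 1 + 2)) :=
            hAT 0 (by have := hbT 0 h0T; omega)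
          rw [eT0, eT1, if_pos rfl, if_neg one_ne_zero, dirAt_zero] at hAT0
          norm_num at hAT0
          exact hAT0
        refine ⟨insert 0 (insert 2 ((T.erase 0).image (· + 2))), ?_, ?_, ?_⟩
        · intro i hiS
          rcases Finset.mem_insert.mp hiS with rfl | hiS
          · omega
          rcases Finset.mem_insert.mp hiS with rfl | hiS
          · omega
          simp only [Finset.mem_image, Finset.mem_erase] at hiS
          obtain ⟨a, ⟨-, haT⟩, rfl⟩ := hiS
          have := hbT a haT; omega
        · intro i hiS hiS'
          have hmem : ∀ k, k ∈ insert 0 (insert 2 ((T.erase 0).image (· + 2))) ↔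
              k = 0 ∨ k = 2 ∨ ∃ a, (a ≠ 0 ∧ a ∈ T) ∧ a + 2 = k := by
            intro k
            simp [Finset.mem_insert, Finset.mem_image, Finset.mem_erase]
          rw [hmem] at hiS hiS'
          rcases hiS with rfl | rfl | ⟨a, ⟨ha0, haT⟩, ha⟩
          · rcases hiS' with h | h | ⟨b, ⟨hb0, hbT'⟩, hb⟩ <;> omega
          · rcases hiS' with h | h | ⟨b, ⟨hb0, hbT'⟩, hb⟩
            · omega
            · omega
            · have hb1 : b = 1 := by omega
              exact h1T (hb1 ▸ hbT')
          · rcases hiS' with h | h | ⟨b, ⟨hb0, hbT'⟩, hb⟩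
            · omega
            · omega
            · have hba : b = a + 1 := by omega
              exact hiT a haT (hba ▸ hbT')
        · set S := insert 0 (insert 2 ((T.erase 0).image (· + 2))) with hSdef
          have memS : ∀ k, k ∈ S ↔ k = 0 ∨ k = 2 ∨ ∃ a, (a ≠ 0 ∧ a ∈ T) ∧ a + 2 = k := by
            intro k
            simp [hSdef, Finset.mem_insert, Finset.mem_image, Finset.mem_erase]
          have eS0 : swapFn S 0 = 1 := swapFn_of_mem ((memS 0).mpr (Or.inl rfl))
          have eS1 : swapFn S 1 = 0 := by
            apply swapFn_of_mem_pred
            · rw [memS]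
              rintro (h | h | ⟨a, ⟨ha0, haT⟩, ha⟩) <;> omega
            · omega
            · exact (memS 0).mpr (Or.inl rfl)
          have eS2 : swapFn S 2 = 3 := swapFn_of_mem ((memS 2).mpr (Or.inr (Or.inl rfl)))
          have h3S : (3 : ℕ) ∉ S := by
            rw [memS]
            rintro (h | h | ⟨a, ⟨ha0, haT⟩, ha⟩)
            · omega
            · omega
            · have ha1 : a = 1 := by omega
              exact h1T (ha1 ▸ haT)
          have eS3 : swapFn S 3 = 2 := by
            apply swapFn_of_mem_pred h3S
            · omega
            · exact (memS 2).mpr (Or.inr (Or.inl rfl))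
          have eS : ∀ j, 2 ≤ j → swapFn S (j + 2) = swapFn T j + 2 := by
            intro j hj
            refine swapFn_step (by omega) (by omega) ?_ ?_
            · rw [memS]
              constructor
              · rintro (h | h | ⟨a, ⟨ha0, haT⟩, ha⟩)
                · omega
                · omega
                · exact (by omega : a = j) ▸ haT
              · intro h; exact Or.inr (Or.inr ⟨j, ⟨by omega, h⟩, rfl⟩)
            · show j + 2 - 1 ∈ S ↔ j - 1 ∈ T
              have h21 : j + 2 - 1 = j + 1 := by omega
              rw [h21, memS]
              constructor
              · rintro (h | h | ⟨a, ⟨ha0, haT⟩, ha⟩)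
                · omega
                · omega
                · exact (by omega : a = j - 1) ▸ haT
              · intro h; exact Or.inr (Or.inr ⟨j - 1, ⟨by omega, h⟩, by omega⟩)
          have hTnz : ∀ k, 2 ≤ k → swapFn T k ≠ 0 := by
            intro k hk h
            rcases swapFn_eq_zero h with h' | h' <;> omega
          have hval : ∀ k, 2 ≤ k → (if swapFn T k = 0 then g 1 else g (swapFn T k + 2))
              = g (swapFn S (k + 2)) := by
            intro k hk
            rw [if_neg (hTnz k hk), eS k hk]
          intro i hi
          rcases i with _ | _ | _ | _ | j
          · show Odir (dirAt p 0) (g (swapFn S 0)) (g (swapFn S 1))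
            rw [eS0, eS1, dirAt_zero]
            exact h10
          · show Odir (dirAt p 1) (g (swapFn S 1)) (g (swapFn S 2))
            rw [eS1, eS2]
            have hd : dirAt p 1 = !p := rfl
            rw [hd, odir_not]
            exact odir_trans h31 h10
          · show Odir (dirAt p 2) (g (swapFn S 2)) (g (swapFn S 3))
            rw [eS2, eS3]
            have hd : dirAt p 2 = p := by rw [show (2 : ℕ) = 0 + 2 from rfl, dirAt_add_two, dirAt_zero]
            rw [hd]
            exact odir_trans (odir_trans h31 h10) h02
          · show Odir (dirAt p 3) (g (swapFn S 3)) (g (swapFn S (2 + 2)))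
            have hAT1 : Odir (dirAt p 1)
                (if swapFn T 1 = 0 then g 1 else g (swapFn T 1 + 2))
                (if swapFn T 2 = 0 then g 1 else g (swapFn T 2 + 2)) :=
              hAT 1 (by omega)
            rw [eT1, if_pos rfl, hval 2 le_rfl] at hAT1
            rw [eS3]
            have hd : dirAt p 3 = !p := rfl
            have hd1 : dirAt p 1 = !p := rfl
            rw [hd1] at hAT1
            rw [hd]
            exact odir_trans (odir_not.mpr (odir_trans h10 h02)) hAT1
          · show Odir (dirAt p (j + 2 + 2)) (g (swapFn S (j + 2 + 2))) (g (swapFn S (j + 3 + 2)))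
            have hATj : Odir (dirAt p (j + 2))
                (if swapFn T (j + 2) = 0 then g 1 else g (swapFn T (j + 2) + 2))
                (if swapFn T (j + 3) = 0 then g 1 else g (swapFn T (j + 3) + 2)) :=
              hAT (j + 2) (by omega)
            rw [← hval (j + 2) (by omega), ← hval (j + 3) (by omega), dirAt_add_two]
            exact hATj
      · -- case 6a
        refine ⟨insert 1 (T.image (· + 2)), ?_, ?_, ?_⟩
        · intro i hiS
          rcases Finset.mem_insert.mp hiS with rfl | hiS
          · omega
          · simp only [Finset.mem_image] at hiS
            obtain ⟨a, haT, rfl⟩ := hiS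
            have := hbT a haT; omega
        · intro i hiS hiS'
          rcases Finset.mem_insert.mp hiS with rfl | hiS
          · rcases Finset.mem_insert.mp hiS' with h | h
            · omega
            · simp only [Finset.mem_image] at h
              obtain ⟨a, haT, ha⟩ := h
              have ha0 : a = 0 := by omega
              exact h0T (ha0 ▸ haT)
          · rcases Finset.mem_insert.mp hiS' with h | h
            · simp only [Finset.mem_image] at hiS
              obtain ⟨a, haT, ha⟩ := hiS
              omega
            · simp only [Finset.mem_image] at hiS h
              obtain ⟨a, haT, ha⟩ := hiS
              obtain ⟨b, hbT', hb⟩ := h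
              have hba : b = a + 1 := by omega
              exact hiT a haT (hba ▸ hbT')
        · set S := insert 1 (T.image (· + 2)) with hSdef
          have memS : ∀ k, k ∈ S ↔ k = 1 ∨ ∃ a ∈ T, a + 2 = k := by
            intro k; simp [hSdef]
          have eS0 : swapFn S 0 = 0 := by
            apply swapFn_of_not
            · rw [memS]; rintro (h | ⟨a, -, ha⟩) <;> omega
            · rintro ⟨h, -⟩; exact h rfl
          have eS1 : swapFn S 1 = 2 := swapFn_of_mem ((memS 1).mpr (Or.inl rfl))
          have eS2 : swapFn S 2 = 1 := by
            apply swapFn_of_mem_pred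
            · rw [memS]
              rintro (h | ⟨a, haT, ha⟩)
              · omega
              · have ha0 : a = 0 := by omega
                exact h0T (ha0 ▸ haT)
            · omega
            · exact (memS 1).mpr (Or.inl rfl)
          have eS : ∀ j, 1 ≤ j → swapFn S (j + 2) = swapFn T j + 2 := by
            intro j hj
            refine swapFn_step (by omega) hj ?_ ?_
            · rw [memS]
              constructor
              · rintro (h | ⟨a, haT, ha⟩)
                · omega
                · exact (by omega : a = j) ▸ haT
              · intro h; exact Or.inr ⟨j, h, rfl⟩
            · show j + 2 - 1 ∈ S ↔ j - 1 ∈ T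
              have h21 : j + 2 - 1 = j + 1 := by omega
              rw [h21, memS]
              constructor
              · rintro (h | ⟨a, haT, ha⟩)
                · omega
                · exact (by omega : a = j - 1) ▸ haT
              · intro h; exact Or.inr ⟨j - 1, h, by omega⟩
          have hTnz : ∀ k, 1 ≤ k → swapFn T k ≠ 0 := by
            intro k hk h
            rcases swapFn_eq_zero h with h' | h'
            · omega
            · exact h0T h'.2
          have hval : ∀ k, (if swapFn T k = 0 then g 1 else g (swapFn T k + 2))
              = g (swapFn S (k + 2)) := by
            intro k
            rcases Nat.eq_zero_or_pos k with rfl | hk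
            · have e0 : swapFn T 0 = 0 :=
                swapFn_of_not h0T (by rintro ⟨h, -⟩; exact h rfl)
              rw [e0, if_pos rfl]
              show g 1 = g (swapFn S 2)
              rw [eS2]
            · rw [if_neg (hTnz k hk), eS k hk]
          intro i hi
          rcases i with _ | _ | j
          · show Odir (dirAt p 0) (g (swapFn S 0)) (g (swapFn S 1))
            rw [eS0, eS1, dirAt_zero]
            exact h02
          · show Odir (dirAt p 1) (g (swapFn S 1)) (g (swapFn S 2))
            rw [eS1, eS2]
            have hd : dirAt p 1 = !p := rfl
            rw [hd, odir_not]
            exact odir_trans h10 h02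
          · show Odir (dirAt p (j + 2)) (g (swapFn S (j + 2))) (g (swapFn S (j + 1 + 2)))
            have hATj : Odir (dirAt p j)
                (if swapFn T j = 0 then g 1 else g (swapFn T j + 2))
                (if swapFn T (j + 1) = 0 then g 1 else g (swapFn T (j + 1) + 2)) :=
              hAT j (by omega)
            rw [← hval j, ← hval (j + 1), dirAt_add_two]
            exact hATj
    · -- branch 4 : oriented g0 < g2
      obtain ⟨T, hbT, hiT, hAT⟩ := IH (m - 1) (by omega) (!p)
        (fun j => if j = 0 then g 0 else g (j + 1))
        (by
          intro i hi' j hj' hne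
          by_cases hi0 : i = 0 <;> by_cases hj0 : j = 0 <;>
            simp only [hi0, hj0, ite_true, ite_false, if_pos, if_neg] <;>
            first
              | omega
              | (apply hinj <;> omega)
              | (simp only [if_neg hi0, if_neg hj0]; apply hinj <;> omega)
              | (simp only [if_neg hj0]; apply hinj <;> omega)
              | (simp only [if_neg hi0]; apply hinj <;> omega))
      have h0T : 0 ∉ T := by
        intro h0T
        have h1T : 1 ∉ T := hiT 0 h0T
        have e0 : swapFn T 0 = 1 := swapFn_of_mem h0T
        have e1 : swapFn T 1 = 0 := swapFn_of_mem_pred h1T one_ne_zero (by simpa using h0T)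
        have hAT0 := hAT 0 (by have := hbT 0 h0T; omega)
        simp only [e0, e1, dirAt_zero] at hAT0
        norm_num at hAT0
        rw [odir_not] at hAT0
        exact odir_asymm h20 hAT0
      refine ⟨insert 0 (T.image (· + 1)), ?_, ?_, ?_⟩
      · intro i hiS
        rcases Finset.mem_insert.mp hiS with rfl | hiS
        · omega
        · simp only [Finset.mem_image] at hiS
          obtain ⟨a, haT, rfl⟩ := hiS
          have := hbT a haT; omega
      · intro i hiS hiS'
        rcases Finset.mem_insert.mp hiS with rfl | hiS
        · rcases Finset.mem_insert.mp hiS' with h | h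
          · omega
          · simp only [Finset.mem_image] at h
            obtain ⟨a, haT, ha⟩ := h
            have ha0 : a = 0 := by omega
            exact h0T (ha0 ▸ haT)
        · rcases Finset.mem_insert.mp hiS' with h | h
          · omega
          · simp only [Finset.mem_image] at hiS h
            obtain ⟨a, haT, ha⟩ := hiS
            obtain ⟨b, hbT', hb⟩ := h
            have hba : b = a + 1 := by omega
            exact hiT a haT (hba ▸ hbT')
      · have eS0 : swapFn (insert 0 (T.image (· + 1))) 0 = 1 :=
          swapFn_of_mem (Finset.mem_insert_self 0 _)
        have h1S : (1 : ℕ) ∉ insert 0 (T.image (· + 1)) := by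
          intro h
          rcases Finset.mem_insert.mp h with h | h
          · omega
          · simp only [Finset.mem_image] at h
            obtain ⟨a, haT, ha⟩ := h
            have ha0 : a = 0 := by omega
            exact h0T (ha0 ▸ haT)
        have eS1 : swapFn (insert 0 (T.image (· + 1))) 1 = 0 :=
          swapFn_of_mem_pred h1S one_ne_zero
            (by simpa using Finset.mem_insert_self 0 (T.image (· + 1)))
        have eS : ∀ j, 1 ≤ j → swapFn (insert 0 (T.image (· + 1))) (j + 1) = swapFn T j + 1 := by
          intro j hj
          refine swapFn_step le_rfl hj ?_ ?_
          · constructor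
            · intro h
              rcases Finset.mem_insert.mp h with h | h
              · omega
              · simp only [Finset.mem_image] at h
                obtain ⟨a, haT, ha⟩ := h
                exact (by omega : a = j) ▸ haT
            · intro h
              exact Finset.mem_insert_of_mem (Finset.mem_image.mpr ⟨j, h, rfl⟩)
          · simp only [Nat.add_sub_cancel]
            constructor
            · intro h
              rcases Finset.mem_insert.mp h with h | h
              · omega
              · simp only [Finset.mem_image] at h
                obtain ⟨a, haT, ha⟩ := h
                exact (by omega : a = j - 1) ▸ haT
            · intro h
              exact Finset.mem_insert_of_mem (Finset.mem_image.mpr ⟨j - 1, h, by omega⟩)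
        have hTnz : ∀ k, 1 ≤ k → swapFn T k ≠ 0 := by
          intro k hk h
          rcases swapFn_eq_zero h with h' | h'
          · omega
          · exact h0T h'.2
        have hval : ∀ k, (if swapFn T k = 0 then g 0 else g (swapFn T k + 1))
            = g (swapFn (insert 0 (T.image (· + 1))) (k + 1)) := by
          intro k
          rcases Nat.eq_zero_or_pos k with rfl | hk
          · have e0 : swapFn T 0 = 0 :=
              swapFn_of_not h0T (by rintro ⟨h, -⟩; exact h rfl)
            rw [e0, if_pos rfl, eS1]
          · rw [if_neg (hTnz k hk), eS k hk]
        intro i hi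
        simp only []
        rcases i with _ | j
        · rw [eS0, eS1, dirAt_zero]
          exact h10
        · have hATj := hAT j (by omega)
          simp only [] at hATj
          rw [← hval j, ← hval (j + 1)]
          have hd : dirAt (!p) j = dirAt p (j + 1) := by rw [dirAt_succ, dirAt_not]
          rw [← hd]
          exact hATj


/-- Subsets of `{0, …, m-1}` with no two consecutive elements. -/
def IndSets (m : ℕ) : Finset (Finset ℕ) :=
  (Finset.range m).powerset.filter (fun S => ∀ i ∈ S, i + 1 ∉ S)

lemma mem_IndSets {m : ℕ} {S : Finset ℕ} :
    S ∈ IndSets m ↔ (∀ i ∈ S, i < m) ∧ (∀ i ∈ S, i + 1 ∉ S) := by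
  simp [IndSets, Finset.mem_filter, Finset.mem_powerset, Finset.subset_iff]

lemma card_IndSets : ∀ m : ℕ, (IndSets m).card = Nat.fib (m + 2) := by
  intro m
  induction m using Nat.strong_induction_on with
  | _ m IH =>
  match m with
  | 0 =>
    have : IndSets 0 = {∅} := by
      ext S
      rw [mem_IndSets]
      simp only [Finset.mem_singleton]
      constructor
      · rintro ⟨hb, -⟩
        ext x
        simp only [Finset.notMem_empty, iff_false]
        intro hx
        exact absurd (hb x hx) (by omega)
      · rintro rfl
        simp
    rw [this]
    rfl
  | 1 =>
    have : IndSets 1 = {∅, {0}} := by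
      ext S
      rw [mem_IndSets]
      simp only [Finset.mem_insert, Finset.mem_singleton]
      constructor
      · rintro ⟨hb, -⟩
        by_cases h0 : 0 ∈ S
        · right
          ext x
          simp only [Finset.mem_singleton]
          constructor
          · intro hx; have := hb x hx; omega
          · rintro rfl; exact h0
        · left
          ext x
          simp only [Finset.notMem_empty, iff_false]
          intro hx
          have := hb x hx
          have hx0 : x = 0 := by omega
          exact h0 (hx0 ▸ hx)
      · rintro (rfl | rfl)
        · simp
        · constructor
          · intro i hi
            simp only [Finset.mem_singleton] at hi
            omega
          · intro i hi
            simp only [Finset.mem_singleton] at hi ⊢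
            omega
    rw [this]
    rfl
  | (m + 2) =>
    have hsplit : IndSets (m + 2) = IndSets (m + 1) ∪ (IndSets m).image (insert (m + 1)) := by
      ext S
      simp only [Finset.mem_union, Finset.mem_image, mem_IndSets]
      constructor
      · rintro ⟨hb, hi⟩
        by_cases hm1 : m + 1 ∈ S
        · right
          refine ⟨S.erase (m + 1), ⟨⟨?_, ?_⟩, ?_⟩⟩
          · intro i hie
            have h1 := Finset.mem_of_mem_erase hie
            have h2 := Finset.ne_of_mem_erase hie
            have h3 := hb i h1
            rcases Nat.lt_or_ge i m with h | h
            · exact h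
            · exfalso
              have him : i = m ∨ i = m + 1 := by omega
              rcases him with rfl | rfl
              · exact hi i h1 hm1
              · exact h2 rfl
          · intro i hie hie2
            exact hi i (Finset.mem_of_mem_erase hie) (Finset.mem_of_mem_erase hie2)
          · exact Finset.insert_erase hm1
        · left
          refine ⟨fun i hiS => ?_, hi⟩
          have := hb i hiS
          have : i ≠ m + 1 := fun h => hm1 (h ▸ hiS)
          omega
      · rintro (⟨hb, hi⟩ | ⟨S', ⟨hb', hi'⟩, rfl⟩)
        · exact ⟨fun i h => by have := hb i h; omega, hi⟩
        · constructor
          · intro i hiI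
            rcases Finset.mem_insert.mp hiI with rfl | h
            · omega
            · have := hb' i h; omega
          · intro i hiI h1I
            rcases Finset.mem_insert.mp hiI with rfl | h
            · rcases Finset.mem_insert.mp h1I with h' | h'
              · omega
              · have := hb' _ h'; omega
            · rcases Finset.mem_insert.mp h1I with h' | h'
              · have := hb' i h; omega
              · exact hi' i h h'
    have hdisj : Disjoint (IndSets (m + 1)) ((IndSets m).image (insert (m + 1))) := by
      rw [Finset.disjoint_left]
      intro S hS1 hS2
      rw [mem_IndSets] at hS1
      simp only [Finset.mem_image] at hS2
      obtain ⟨S', hS', rfl⟩ := hS2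
      have := hS1.1 (m + 1) (Finset.mem_insert_self _ _)
      omega
    have hinjcard : ((IndSets m).image (insert (m + 1))).card = (IndSets m).card := by
      apply Finset.card_image_of_injOn
      intro a ha b hb hab
      rw [Finset.mem_coe, mem_IndSets] at ha hb
      have ha' : m + 1 ∉ a := fun h => by have := ha.1 _ h; omega
      have hb' : m + 1 ∉ b := fun h => by have := hb.1 _ h; omega
      have := congrArg (fun s => Finset.erase s (m + 1)) hab
      simpa [Finset.erase_insert ha', Finset.erase_insert hb'] using this
    rw [hsplit, Finset.card_union_of_disjoint hdisj, hinjcard,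
      IH (m + 1) (by omega), IH m (by omega)]
    have h1 : m + 1 + 2 = m + 2 + 1 := by omega
    rw [h1, Nat.fib_add_two (n := m + 2)]
    omega

/-- The permutation of `Fin n` swapping according to `S`. -/
def mkPerm (n : ℕ) (S : Finset ℕ) (hb : ∀ i ∈ S, i + 1 < n) (hi : ∀ i ∈ S, i + 1 ∉ S) :
    Equiv.Perm (Fin n) :=
  Function.Involutive.toPerm (fun j => ⟨swapFn S j.1, swapFn_lt hb j.2⟩)
    (fun j => Fin.ext (swapFn_invol hi j.1))

lemma mkPerm_apply (n : ℕ) (S : Finset ℕ) (hb : ∀ i ∈ S, i + 1 < n)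
    (hi : ∀ i ∈ S, i + 1 ∉ S) (j : Fin n) :
    mkPerm n S hb hi j = ⟨swapFn S j.1, swapFn_lt hb j.2⟩ := rfl

end EulerFibAux

open EulerFibAux

/-- `E_n ⋅ F_n ≥ n!`, where `E_n` is the number of alternating permutations in `S_n`
and `F_n` is the Fibonacci number with the convention `F_1 = 1`, `F_2 = 2`
(i.e. `F_n = Nat.fib (n+1)`). -/
theorem euler_fibonacci_factorial (n : ℕ) (hn : 1 ≤ n) :
    n.factorial ≤ alternatingCount n * Nat.fib (n + 1) := by
  classical
  let A := {σ : Equiv.Perm (Fin n) //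
    ∀ i : ℕ, ∀ h : i + 1 < n,
      (Even i → σ ⟨i + 1, h⟩ < σ ⟨i, Nat.lt_of_succ_lt h⟩) ∧
      (¬Even i → σ ⟨i, Nat.lt_of_succ_lt h⟩ < σ ⟨i + 1, h⟩)}
  let B := {S : Finset ℕ // S ∈ IndSets (n - 1)}
  have hbofB : ∀ (S : B), ∀ i ∈ S.1, i + 1 < n := by
    intro S i hiS
    have := (mem_IndSets.mp S.2).1 i hiS
    omega
  have hiofB : ∀ (S : B), ∀ i ∈ S.1, i + 1 ∉ S.1 := fun S => (mem_IndSets.mp S.2).2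
  let Φ : A × B → Equiv.Perm (Fin n) := fun x =>
    (mkPerm n x.2.1 (hbofB x.2) (hiofB x.2)).trans x.1.1
  have hsurj : Function.Surjective Φ := by
    intro σ
    set G : ℕ → ℕ := fun j => if h : j < n then ((σ ⟨j, h⟩ : Fin n) : ℕ) else 0 with hG
    obtain ⟨S, hb, hi, hAlt⟩ := key n true G
      (by
        intro i hi' j hj' hne h
        rw [hG] at h
        simp only [dif_pos hi', dif_pos hj'] at h
        have := σ.injective (Fin.ext h)
        rw [Fin.mk.injEq] at this
        exact hne this)
    have hS : S ∈ IndSets (n - 1) :=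
      mem_IndSets.mpr ⟨fun i h => by have := hb i h; omega, hi⟩
    have hswlt : ∀ j : ℕ, j < n → swapFn S j < n := fun j hj => swapFn_lt hb hj
    refine ⟨⟨⟨(mkPerm n S hb hi).trans σ, ?_⟩, ⟨S, hS⟩⟩, ?_⟩
    · intro i h
      have h1 := hAlt i h
      simp only [] at h1
      have hgi : G (swapFn S i) = ((σ ⟨swapFn S i, hswlt i (by omega)⟩ : Fin n) : ℕ) := by
        rw [hG]
        simp only [dif_pos (hswlt i (by omega : i < n))]
      have hgi1 : G (swapFn S (i + 1))
          = ((σ ⟨swapFn S (i + 1), hswlt (i + 1) h⟩ : Fin n) : ℕ) := by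
        rw [hG]
        simp only [dif_pos (hswlt (i + 1) h)]
      rw [hgi, hgi1] at h1
      constructor
      · intro hev
        have hd : dirAt true i = true := by
          unfold dirAt
          rw [if_pos (Nat.even_iff.mp hev)]
        rw [hd] at h1
        simp only [Odir, if_pos rfl] at h1
        simp only [Equiv.trans_apply, mkPerm_apply, Fin.lt_def]
        exact h1
      · intro hod
        have hd : dirAt true i = false := by
          unfold dirAt
          rw [if_neg (by rw [Nat.even_iff] at hod; exact hod)]
          rfl
        rw [hd] at h1
        simp only [Odir, Bool.false_eq_true, if_false] at h1
        simp only [Equiv.trans_apply, mkPerm_apply, Fin.lt_def]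
        exact h1
    · have hinvol : ∀ (hb' : ∀ i ∈ S, i + 1 < n) (hi' : ∀ i ∈ S, i + 1 ∉ S) (y : Fin n),
          mkPerm n S hb hi (mkPerm n S hb' hi' y) = y := fun hb' hi' y =>
        Fin.ext (swapFn_invol hi y.1)
      ext x
      simp only [Φ, Equiv.trans_apply]
      rw [hinvol _ _ x]
  haveI : Finite A := Subtype.finite
  haveI : Fintype B := FinsetCoe.fintype _
  have hcard := Nat.card_le_card_of_surjective Φ hsurj
  rw [Nat.card_prod] at hcard
  have hA : Nat.card A = alternatingCount n := rfl
  have hB : Nat.card B = Nat.fib (n + 1) := by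
    have h1 : Nat.card B = (IndSets (n - 1)).card := Nat.card_eq_finsetCard _
    rw [h1, card_IndSets]
    congr 1
    omega
  have hP : Nat.card (Equiv.Perm (Fin n)) = n.factorial := by
    rw [Nat.card_eq_fintype_card]
    simp [Fintype.card_perm, Fintype.card_fin]
  rw [hP, hA, hB] at hcard
  exact hcard
end

section
/- For any partition τ, the product of the hook lengths of τ is at most the product over all cells (i,j) of τ of (i+j-1): ∏_{(i,j)∈τ} h(i,j) ≤ ∏_{(i,j)∈τ} (i+j-1). -/
open Finset

namespace HookIneqAux

/-! ### Arithmetic lemmas -/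

lemma fact_prod (t : ℕ) : ∀ r : ℕ,
    t.factorial * ∏ i ∈ range r, (t + 1 + i) = (t + r).factorial := by
  intro r
  induction r with
  | zero => simp
  | succ r ih =>
    rw [prod_range_succ, ← mul_assoc, ih]
    rw [show t + (r + 1) = (t + r) + 1 from rfl, Nat.factorial_succ]
    ring

lemma prod_succ_fact (r : ℕ) : ∏ j ∈ range r, (j + 1) = r.factorial := by
  induction r with
  | zero => simp
  | succ n ih => rw [prod_range_succ, ih, Nat.factorial_succ]; ring

lemma prod_reflect_one (r : ℕ) : ∏ i ∈ range r, (r - i) = r.factorial := by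
  have h := Finset.prod_range_reflect (fun j => j + 1) r
  have h2 : ∏ j ∈ range r, (r - j) = ∏ j ∈ range r, (r - 1 - j + 1) := by
    apply prod_congr rfl
    intro j hj
    rw [mem_range] at hj
    omega
  rw [h2, h, prod_succ_fact]

lemma prod_reflect_add (t r : ℕ) :
    ∏ i ∈ range r, (r - i + t) = ∏ i ∈ range r, (t + 1 + i) := by
  have h := Finset.prod_range_reflect (fun j => t + 1 + j) r
  rw [← h]
  apply prod_congr rfl
  intro j hj
  rw [mem_range] at hj
  omega

/-- Row telescope. -/
lemma row_lemma (t : ℕ) : ∀ a : ℕ, 1 ≤ a → ∀ f : ℕ → ℕ,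
    (∀ j < t, a + (t - 1 - j) ≤ f j) →
    a * ∏ j ∈ range t, (f j + 1) ≤ (a + t) * ∏ j ∈ range t, f j := by
  induction t with
  | zero => intro a ha f _; simp
  | succ t ih =>
    intro a ha f hf
    have hf' : ∀ j < t, (a + 1) + (t - 1 - j) ≤ f j := by
      intro j hj
      have := hf j (by omega)
      omega
    have IH := ih (a + 1) (by omega) f hf'
    have hft : a ≤ f t := by have := hf t (by omega); omega
    set P := ∏ j ∈ range t, f j with hP
    set Q := ∏ j ∈ range t, (f j + 1) with hQ
    rw [prod_range_succ, prod_range_succ, ← hP, ← hQ]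
    have key : a * (f t + 1) ≤ (a + 1) * f t := by nlinarith
    have h2 : (a + 1) * (a * (Q * (f t + 1))) ≤ (a + 1) * ((a + (t + 1)) * (P * f t)) := by
      calc (a + 1) * (a * (Q * (f t + 1)))
          = (a * (f t + 1)) * ((a + 1) * Q) := by ring
        _ ≤ (a * (f t + 1)) * ((a + 1 + t) * P) := Nat.mul_le_mul_left _ IH
        _ = ((a * (f t + 1)) * (a + 1 + t)) * P := by ring
        _ ≤ (((a + 1) * f t) * (a + 1 + t)) * P :=
            Nat.mul_le_mul_right _ (Nat.mul_le_mul_right _ key)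
        _ = (a + 1) * ((a + (t + 1)) * (P * f t)) := by ring
    exact Nat.le_of_mul_le_mul_left h2 (by omega)

/-- Rectangle lemma. -/
lemma rect_lemma (r t : ℕ) (H : ℕ → ℕ → ℕ)
    (hH : ∀ i < r, ∀ j < t, (r - i) + (t - 1 - j) ≤ H i j) :
    t.factorial * ∏ c ∈ range r ×ˢ range t, (H c.1 c.2 + 1) ≤
      (∏ j ∈ range t, (r + 1 + j)) * ∏ c ∈ range r ×ˢ range t, H c.1 c.2 := by
  have hrows : ∀ i ∈ range r,
      (r - i) * ∏ j ∈ range t, (H i j + 1) ≤ (r - i + t) * ∏ j ∈ range t, H i j := by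
    intro i hi
    rw [mem_range] at hi
    exact row_lemma t (r - i) (by omega) (H i) (fun j hj => hH i hi j hj)
  have hmul : ∏ i ∈ range r, ((r - i) * ∏ j ∈ range t, (H i j + 1)) ≤
      ∏ i ∈ range r, ((r - i + t) * ∏ j ∈ range t, H i j) :=
    Finset.prod_le_prod' hrows
  rw [prod_mul_distrib, prod_mul_distrib, prod_reflect_one, prod_reflect_add] at hmul
  -- hmul : r! * ∏∏(H+1) ≤ (∏ (t+1+i)) * ∏∏ H
  have key : r.factorial * (t.factorial * ∏ c ∈ range r ×ˢ range t, (H c.1 c.2 + 1)) ≤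
      r.factorial * ((∏ j ∈ range t, (r + 1 + j)) * ∏ c ∈ range r ×ˢ range t, H c.1 c.2) := by
    rw [Finset.prod_product, Finset.prod_product]
    calc r.factorial * (t.factorial * ∏ i ∈ range r, ∏ j ∈ range t, (H i j + 1))
        = t.factorial * (r.factorial * ∏ i ∈ range r, ∏ j ∈ range t, (H i j + 1)) := by ring
      _ ≤ t.factorial * ((∏ i ∈ range r, (t + 1 + i)) * ∏ i ∈ range r, ∏ j ∈ range t, H i j) :=
          Nat.mul_le_mul_left _ hmul
      _ = (t.factorial * ∏ i ∈ range r, (t + 1 + i)) *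
            ∏ i ∈ range r, ∏ j ∈ range t, H i j := by ring
      _ = (r.factorial * ∏ j ∈ range t, (r + 1 + j)) *
            ∏ i ∈ range r, ∏ j ∈ range t, H i j := by
          rw [fact_prod, fact_prod, Nat.add_comm t r]
      _ = r.factorial * ((∏ j ∈ range t, (r + 1 + j)) *
            ∏ i ∈ range r, ∏ j ∈ range t, H i j) := by ring
  exact Nat.le_of_mul_le_mul_left key (Nat.factorial_pos r)

/-! ### Young diagram lemmas -/

lemma rowLen_eq_of {μ : YoungDiagram} {i r : ℕ} (h : ∀ j, (i, j) ∈ μ ↔ j < r) :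
    μ.rowLen i = r := by
  rcases lt_trichotomy (μ.rowLen i) r with hlt | he | hgt
  · have := YoungDiagram.mem_iff_lt_rowLen.mp ((h (μ.rowLen i)).mpr hlt)
    omega
  · exact he
  · have := (h r).mp (YoungDiagram.mem_iff_lt_rowLen.mpr hgt)
    omega

lemma colLen_eq_of {μ : YoungDiagram} {j r : ℕ} (h : ∀ i, (i, j) ∈ μ ↔ i < r) :
    μ.colLen j = r := by
  rcases lt_trichotomy (μ.colLen j) r with hlt | he | hgt
  · have := YoungDiagram.mem_iff_lt_colLen.mp ((h (μ.colLen j)).mpr hlt)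
    omega
  · exact he
  · have := (h r).mp (YoungDiagram.mem_iff_lt_colLen.mpr hgt)
    omega

/-- the first `m` rows of `τ` -/
def trunc (τ : YoungDiagram) (m : ℕ) : YoungDiagram where
  cells := τ.cells.filter (fun c => c.1 < m)
  isLowerSet := by
    intro c1 c2 hle h
    simp only [Finset.coe_filter, Set.mem_setOf_eq, Finset.mem_coe,
      YoungDiagram.mem_cells] at h ⊢
    exact ⟨τ.isLowerSet hle h.1, lt_of_le_of_lt hle.1 h.2⟩

lemma mem_trunc {τ : YoungDiagram} {m : ℕ} {c : ℕ × ℕ} :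
    c ∈ trunc τ m ↔ c ∈ τ ∧ c.1 < m := by
  change c ∈ (τ.cells.filter _) ↔ _
  rw [Finset.mem_filter]
  rfl

lemma trunc_rowLen {τ : YoungDiagram} {m i : ℕ} (hi : i < m) :
    (trunc τ m).rowLen i = τ.rowLen i := by
  apply rowLen_eq_of
  intro j
  rw [mem_trunc, YoungDiagram.mem_iff_lt_rowLen]
  exact ⟨fun h => h.1, fun h => ⟨h, hi⟩⟩

lemma trunc_colLen {τ : YoungDiagram} {m j : ℕ} :
    (trunc τ m).colLen j = min (τ.colLen j) m := by
  apply colLen_eq_of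
  intro i
  rw [mem_trunc, YoungDiagram.mem_iff_lt_colLen]
  simp only [lt_min_iff]

end HookIneqAux

open HookIneqAux in
/-- The hook inequality: for any Young diagram `τ`, the product of the hook lengths
`h(i,j) = τ_i + τ'_j - i - j + 1` is at most the product of the complementary hooks
`h*(i,j) = i + j - 1` (here cells `(i,j)` are 0-indexed, so `h*(i,j) = i + j + 1`). -/
theorem hook_inequality (τ : YoungDiagram) :
    ∏ c ∈ τ.cells, (τ.rowLen c.1 + τ.colLen c.2 - c.1 - c.2 - 1) ≤
      ∏ c ∈ τ.cells, (c.1 + c.2 + 1) := by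
  suffices H : ∀ n (τ : YoungDiagram), τ.colLen 0 ≤ n →
      ∏ c ∈ τ.cells, (τ.rowLen c.1 + τ.colLen c.2 - c.1 - c.2 - 1) ≤
        ∏ c ∈ τ.cells, (c.1 + c.2 + 1) from H (τ.colLen 0) τ le_rfl
  intro n
  induction n with
  | zero =>
    intro τ h0
    have hempty : τ.cells = ∅ := by
      rw [Finset.eq_empty_iff_forall_notMem]
      intro c hc
      rw [YoungDiagram.mem_cells, YoungDiagram.mem_iff_lt_colLen] at hc
      have := τ.colLen_anti 0 c.2 (Nat.zero_le _)
      omega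
    simp [hempty]
  | succ n ih =>
    intro τ hn
    by_cases hle : τ.colLen 0 ≤ n
    · exact ih τ hle
    have hcol0 : τ.colLen 0 = n + 1 := by omega
    set t := τ.rowLen n with ht
    set μ := trunc τ n with hμ
    have hμcells : μ.cells = τ.cells.filter (fun c => c.1 < n) := rfl
    have hF1 : ∀ c ∈ τ.cells, c.1 ≤ n := by
      intro c hc
      rw [YoungDiagram.mem_cells, YoungDiagram.mem_iff_lt_colLen] at hc
      have := τ.colLen_anti 0 c.2 (Nat.zero_le _)
      omega
    -- the removed row
    have hrow : τ.cells.filter (fun c => ¬ c.1 < n) = ({n} : Finset ℕ) ×ˢ range t := by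
      rw [← YoungDiagram.row_eq_prod]
      unfold YoungDiagram.row
      apply Finset.filter_congr
      intro c hc
      have := hF1 c hc
      constructor
      · intro h; omega
      · intro h; omega
    -- hooks on the last row
    have hcolfull : ∀ j < t, τ.colLen j = n + 1 := by
      intro j hj
      have hmem : (n, j) ∈ τ := YoungDiagram.mem_iff_lt_rowLen.mpr hj
      have h1 : n < τ.colLen j := YoungDiagram.mem_iff_lt_colLen.mp hmem
      have h2 := τ.colLen_anti 0 j (Nat.zero_le j)
      omega
    -- μ facts
    have hμrow : ∀ i < n, μ.rowLen i = τ.rowLen i := fun i hi => trunc_rowLen hi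
    have hμcol : ∀ j, μ.colLen j = min (τ.colLen j) n := fun j => trunc_colLen
    have hμcolfull : ∀ j < t, μ.colLen j = n := by
      intro j hj
      rw [hμcol j, hcolfull j hj]
      omega
    have hμcoleq : ∀ j, ¬ j < t → μ.colLen j = τ.colLen j := by
      intro j hj
      have : τ.colLen j ≤ n := by
        by_contra hcon
        have : (n, j) ∈ τ := YoungDiagram.mem_iff_lt_colLen.mpr (by omega)
        rw [YoungDiagram.mem_iff_lt_rowLen] at this
        omega
      rw [hμcol j]
      omega
    -- hook relation on μ cells
    have hook_rel : ∀ c ∈ μ.cells,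
        τ.rowLen c.1 + τ.colLen c.2 - c.1 - c.2 - 1 =
          (μ.rowLen c.1 + μ.colLen c.2 - c.1 - c.2 - 1) + (if c.2 < t then 1 else 0) := by
      intro c hc
      rw [YoungDiagram.mem_cells, mem_trunc] at hc
      obtain ⟨hcτ, hcn⟩ := hc
      have hr := hμrow c.1 hcn
      have harm : c.2 < τ.rowLen c.1 := YoungDiagram.mem_iff_lt_rowLen.mp (by
        cases c; exact hcτ)
      have hleg : c.1 < τ.colLen c.2 := YoungDiagram.mem_iff_lt_colLen.mp (by
        cases c; exact hcτ)
      by_cases hct : c.2 < t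
      · have h1 := hμcolfull c.2 hct
        have h2 := hcolfull c.2 hct
        simp only [hct, if_pos]
        omega
      · have h1 := hμcoleq c.2 hct
        simp only [hct, if_neg, not_false_iff]
        omega
    -- split of μ cells
    have hrect : μ.cells.filter (fun c => c.2 < t) = range n ×ˢ range t := by
      ext c
      simp only [Finset.mem_filter, YoungDiagram.mem_cells, hμ, mem_trunc, Finset.mem_product,
        mem_range]
      constructor
      · rintro ⟨⟨_, h2⟩, h3⟩; exact ⟨h2, h3⟩
      · rintro ⟨h1, h2⟩
        refine ⟨⟨?_, h1⟩, h2⟩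
        have : t ≤ τ.rowLen c.1 := τ.rowLen_anti c.1 n (by omega)
        have : c.2 < τ.rowLen c.1 := by omega
        rw [YoungDiagram.mem_iff_lt_rowLen.symm] at this
        cases c; exact this
    -- the rectangle hooks bound
    have hHbound : ∀ i < n, ∀ j < t,
        (n - i) + (t - 1 - j) ≤ μ.rowLen i + μ.colLen j - i - j - 1 := by
      intro i hi j hj
      have h1 := hμrow i hi
      have h2 := hμcolfull j hj
      have h3 : t ≤ τ.rowLen i := τ.rowLen_anti i n (by omega)
      omega
    -- abbreviations
    set hkμ : ℕ × ℕ → ℕ := fun c => μ.rowLen c.1 + μ.colLen c.2 - c.1 - c.2 - 1 with hhkμ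
    -- split the τ products
    have splitL : ∏ c ∈ τ.cells, (τ.rowLen c.1 + τ.colLen c.2 - c.1 - c.2 - 1) =
        (∏ c ∈ μ.cells, (τ.rowLen c.1 + τ.colLen c.2 - c.1 - c.2 - 1)) *
          ∏ j ∈ range t, (t - j) := by
      rw [← Finset.prod_filter_mul_prod_filter_not τ.cells (fun c => c.1 < n), ← hμcells, hrow]
      congr 1
      rw [Finset.singleton_product, Finset.prod_map]
      apply prod_congr rfl
      intro j hj
      rw [mem_range] at hj
      have h1 := hcolfull j hj
      simp only [Function.Embedding.coeFn_mk]
      omega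
    have splitR : ∏ c ∈ τ.cells, (c.1 + c.2 + 1) =
        (∏ c ∈ μ.cells, (c.1 + c.2 + 1)) * ∏ j ∈ range t, (n + 1 + j) := by
      rw [← Finset.prod_filter_mul_prod_filter_not τ.cells (fun c => c.1 < n), ← hμcells, hrow]
      congr 1
      rw [Finset.singleton_product, Finset.prod_map]
      apply prod_congr rfl
      intro j hj
      simp only [Function.Embedding.coeFn_mk]
      omega
    -- rewrite hooks of τ on μ cells
    have hμprod : ∏ c ∈ μ.cells, (τ.rowLen c.1 + τ.colLen c.2 - c.1 - c.2 - 1) =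
        (∏ c ∈ range n ×ˢ range t, (hkμ c + 1)) *
          ∏ c ∈ μ.cells.filter (fun c => ¬ c.2 < t), hkμ c := by
      rw [Finset.prod_congr rfl hook_rel]
      rw [← Finset.prod_filter_mul_prod_filter_not μ.cells (fun c => c.2 < t), hrect]
      congr 1
      · apply prod_congr rfl
        intro c hc
        rw [← hrect, Finset.mem_filter] at hc
        simp [hc.2]
        rfl
      · apply prod_congr rfl
        intro c hc
        rw [Finset.mem_filter] at hc
        simp [hc.2]
        rfl
    have hμsplit : ∏ c ∈ μ.cells, hkμ c =
        (∏ c ∈ range n ×ˢ range t, hkμ c) *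
          ∏ c ∈ μ.cells.filter (fun c => ¬ c.2 < t), hkμ c := by
      rw [← Finset.prod_filter_mul_prod_filter_not μ.cells (fun c => c.2 < t), hrect]
    -- factorial of last row
    have hfact : ∏ j ∈ range t, (t - j) = t.factorial := prod_reflect_one t
    -- rectangle lemma instance
    have hrectineq := rect_lemma n t (fun i j => μ.rowLen i + μ.colLen j - i - j - 1)
      hHbound
    -- induction hypothesis for μ
    have hμlen : μ.colLen 0 ≤ n := by rw [hμcol 0]; omega
    have hIH := ih μ hμlen
    -- assemble
    rw [splitL, splitR, hμprod, hfact]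
    set Rest := ∏ c ∈ μ.cells.filter (fun c => ¬ c.2 < t), hkμ c with hRest
    calc (∏ c ∈ range n ×ˢ range t, (hkμ c + 1)) * Rest * t.factorial
        = (t.factorial * ∏ c ∈ range n ×ˢ range t, (hkμ c + 1)) * Rest := by ring
      _ ≤ ((∏ j ∈ range t, (n + 1 + j)) * ∏ c ∈ range n ×ˢ range t, hkμ c) * Rest :=
          Nat.mul_le_mul_right _ hrectineq
      _ = (∏ c ∈ μ.cells, hkμ c) * ∏ j ∈ range t, (n + 1 + j) := by rw [hμsplit]; ring
      _ ≤ (∏ c ∈ μ.cells, (c.1 + c.2 + 1)) * ∏ j ∈ range t, (n + 1 + j) :=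
          Nat.mul_le_mul_right _ hIH
      _ = (∏ c ∈ μ.cells, (c.1 + c.2 + 1)) * ∏ j ∈ range t, (n + 1 + j) := rfl
end
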